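/- Let x_j be a continuous, globally bounded, strictly sub-luminal trajectory with advanced light-cone time t⁺(t,x) and advanced delay function φ(t,x). Let (t₀, x₀) satisfy φ(t₀, x₀) > 0, set s₀ = t⁺(t₀, x₀), and assume x_j is continuously differentiable on a neighborhood of s₀ with ‖x_j′‖ < 1 there; write v = x_j′(s₀) and n̂ = (x₀ − x_j(s₀))/φ(t₀, x₀). Then φ is differentiable at (t₀, x₀), its spatial gradient is ∇φ(t₀, x₀) = n̂ / (1 + ⟪n̂, v⟫), and its time derivative is ∂φ/∂t(t₀, x₀) = −⟪n̂, v⟫ / (1 + ⟪n̂, v⟫) = ‖∇φ(t₀, x₀)‖ − 1. -/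

import Mathlib

open scoped RealInnerProductSpace

noncomputable abbrev E3 : Type := EuclideanSpace ℝ (Fin 3)
abbrev P3 : Type := ℝ × E3
abbrev X3 : Type := P3 × ℝ

/-- gradient and time derivative of the advanced delay function. -/
theorem stmt_3 (xj : ℝ → EuclideanSpace ℝ (Fin 3))
    (hcont : Continuous xj)
    (hbdd : Bornology.IsBounded (Set.range xj))
    (hsub : ∀ a b : ℝ, a ≠ b → ‖xj a - xj b‖ < |a - b|)
    (tplus : ℝ → EuclideanSpace ℝ (Fin 3) → ℝ)
    (htp : ∀ t x, tplus t x = t + ‖x - xj (tplus t x)‖)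
    (t₀ : ℝ) (x₀ : EuclideanSpace ℝ (Fin 3))
    (hpos : 0 < ‖x₀ - xj (tplus t₀ x₀)‖)
    (v' : ℝ → EuclideanSpace ℝ (Fin 3)) (U : Set ℝ)
    (hU : U ∈ nhds (tplus t₀ x₀))
    (hderiv : ∀ s ∈ U, HasDerivAt xj (v' s) s)
    (hcv : ContinuousOn v' U)
    (hlum : ∀ s ∈ U, ‖v' s‖ < 1)
    (v : EuclideanSpace ℝ (Fin 3)) (hv : v = v' (tplus t₀ x₀))
    (nhat : EuclideanSpace ℝ (Fin 3))
    (hn : nhat = ‖x₀ - xj (tplus t₀ x₀)‖⁻¹ • (x₀ - xj (tplus t₀ x₀))) :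
    DifferentiableAt ℝ
        (fun p : ℝ × EuclideanSpace ℝ (Fin 3) => ‖p.2 - xj (tplus p.1 p.2)‖) (t₀, x₀) ∧
    HasGradientAt (fun x => ‖x - xj (tplus t₀ x)‖)
        ((1 + ⟪nhat, v⟫)⁻¹ • nhat) x₀ ∧
    HasDerivAt (fun t => ‖x₀ - xj (tplus t x₀)‖)
        (-⟪nhat, v⟫ / (1 + ⟪nhat, v⟫)) t₀ ∧
    -⟪nhat, v⟫ / (1 + ⟪nhat, v⟫) = ‖(1 + ⟪nhat, v⟫)⁻¹ • nhat‖ - 1 := by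
  classical
  set s₀ : ℝ := tplus t₀ x₀ with hs₀
  have hs₀U : U ∈ nhds s₀ := hU
  have hs₀mem : s₀ ∈ U := mem_of_mem_nhds hU
  have hvlt : ‖v‖ < 1 := by rw [hv]; exact hlum s₀ hs₀mem
  set y₀ : EuclideanSpace ℝ (Fin 3) := x₀ - xj s₀ with hy₀
  have hrpos : 0 < ‖y₀‖ := hpos
  set c : ℝ := ⟪nhat, v⟫ with hc
  have hnnorm : ‖nhat‖ = 1 := by
    rw [hn, norm_smul, norm_inv, norm_norm]
    field_simp
  have hcabs : |c| < 1 := by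
    calc |c| ≤ ‖nhat‖ * ‖v‖ := abs_real_inner_le_norm _ _
    _ = ‖v‖ := by rw [hnnorm, one_mul]
    _ < 1 := hvlt
  have h1c : 0 < 1 + c := by
    have := abs_lt.mp hcabs
    linarith [this.1]
  have h1c' : (1 : ℝ) + c ≠ 0 := ne_of_gt h1c
  -- uniqueness of solutions of the light-cone equation
  have huniq : ∀ (t : ℝ) (x : EuclideanSpace ℝ (Fin 3)) (s : ℝ), s = t + ‖x - xj s‖ → s = tplus t x := by
    intro t x s hs
    by_contra hne
    have h1 := htp t x
    have he : s - tplus t x = ‖x - xj s‖ - ‖x - xj (tplus t x)‖ := by linarith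
    have h2 : |s - tplus t x| ≤ ‖(x - xj s) - (x - xj (tplus t x))‖ := by
      rw [he]; exact abs_norm_sub_norm_le _ _
    have h3 : (x - xj s) - (x - xj (tplus t x)) = xj (tplus t x) - xj s := by abel
    have h4 : ‖xj (tplus t x) - xj s‖ < |tplus t x - s| := hsub _ _ (fun h => hne h.symm)
    rw [h3] at h2
    rw [abs_sub_comm] at h4
    linarith
  -- strict differentiability of xj at s₀
  have hxj : HasStrictDerivAt xj v s₀ := by
    have h := hasStrictDerivAt_of_hasDerivAt_of_continuousAt
      (Filter.eventually_of_mem hU hderiv) (hcv.continuousAt hU)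
    rwa [← hv] at h
  -- strict differentiability of the norm at y₀
  have hnormstrict : HasStrictFDerivAt (fun y : EuclideanSpace ℝ (Fin 3) => ‖y‖) (innerSL ℝ nhat) y₀ := by
    have hsq : HasStrictFDerivAt (fun y : EuclideanSpace ℝ (Fin 3) => ‖y‖ ^ 2) (2 • innerSL ℝ y₀) y₀ :=
      hasStrictFDerivAt_norm_sq y₀
    have hne : ‖y₀‖ ^ 2 ≠ 0 := by positivity
    have h := hsq.sqrt hne
    have heq : (fun y : EuclideanSpace ℝ (Fin 3) => Real.sqrt (‖y‖ ^ 2)) = fun y : EuclideanSpace ℝ (Fin 3) => ‖y‖ := by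
      funext y; rw [Real.sqrt_sq (norm_nonneg y)]
    rw [heq] at h
    refine h.congr_fderiv ?_
    symm
    ext z
    have hsqrt : Real.sqrt (‖y₀‖ ^ 2) = ‖y₀‖ := Real.sqrt_sq (norm_nonneg y₀)
    simp only [ContinuousLinearMap.smul_apply, ContinuousLinearMap.smul_apply,
      innerSL_apply_apply, hsqrt, smul_eq_mul]
    rw [hn, real_inner_smul_left, nsmul_eq_mul]
    push_cast
    field_simp
  -- ambient objects
  set q₀ : X3 := ((t₀, x₀), s₀) with hq₀
  set g : X3 → ℝ := fun q => q.2 - q.1.1 - ‖q.1.2 - xj q.2‖ with hgdef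
  set Φ : X3 → X3 := fun q => (q.1, g q) with hΦdef
  -- continuous linear maps
  set fstX : X3 →L[ℝ] P3 := ContinuousLinearMap.fst ℝ P3 ℝ with hfstX
  set sndX : X3 →L[ℝ] ℝ := ContinuousLinearMap.snd ℝ P3 ℝ with hsndX
  set fstP : P3 →L[ℝ] ℝ := ContinuousLinearMap.fst ℝ ℝ E3 with hfstP
  set sndP : P3 →L[ℝ] E3 := ContinuousLinearMap.snd ℝ ℝ E3 with hsndP
  set M : X3 →L[ℝ] E3 := sndP.comp fstX - (ContinuousLinearMap.smulRight (1 : ℝ →L[ℝ] ℝ) v).comp sndX with hM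
  set G' : X3 →L[ℝ] ℝ := (sndX - fstP.comp fstX) - (innerSL ℝ nhat).comp M with hG'
  set A : X3 →L[ℝ] X3 := fstX.prod G' with hA
  set B : X3 →L[ℝ] X3 :=
    fstX.prod ((1 + c)⁻¹ • (sndX + fstP.comp fstX + (innerSL ℝ nhat).comp (sndP.comp fstX)))
    with hB
  -- strict derivative of Φ
  have hmq : HasStrictFDerivAt (fun q : X3 => q.1.2 - xj q.2) M q₀ := by
    have h1 : HasStrictFDerivAt (fun q : X3 => q.1.2) (sndP.comp fstX) q₀ :=
      (sndP.comp fstX).hasStrictFDerivAt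
    have h2 : HasStrictFDerivAt (fun q : X3 => xj q.2)
        ((ContinuousLinearMap.smulRight (1 : ℝ →L[ℝ] ℝ) v).comp sndX) q₀ := by
      have hxjF : HasStrictFDerivAt xj (ContinuousLinearMap.smulRight (1 : ℝ →L[ℝ] ℝ) v) s₀ := hxj
      exact hxjF.comp q₀ sndX.hasStrictFDerivAt
    exact h1.sub h2
  have hnormq : HasStrictFDerivAt (fun q : X3 => ‖q.1.2 - xj q.2‖)
      ((innerSL ℝ nhat).comp M) q₀ := by
    have := hnormstrict.comp q₀ hmq
    exact this
  have hg : HasStrictFDerivAt g G' q₀ := by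
    have h1 : HasStrictFDerivAt (fun q : X3 => q.2 - q.1.1) (sndX - fstP.comp fstX) q₀ :=
      (sndX - fstP.comp fstX).hasStrictFDerivAt
    exact h1.sub hnormq
  have hΦs : HasStrictFDerivAt Φ A q₀ := fstX.hasStrictFDerivAt.prodMk hg
  -- A and B are inverse to each other
  have happA : ∀ q : X3, A q = (q.1, (1 + c) * q.2 - q.1.1 - ⟪nhat, q.1.2⟫) := by
    rintro ⟨⟨dt, dx⟩, ds⟩
    simp only [hA, hG', hM, ContinuousLinearMap.prod_apply, ContinuousLinearMap.sub_apply,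
      ContinuousLinearMap.comp_apply, ContinuousLinearMap.coe_fst', ContinuousLinearMap.coe_snd',
      ContinuousLinearMap.smul_apply, innerSL_apply_apply, hfstX, hsndX, hfstP, hsndP,
      ContinuousLinearMap.smulRight_apply, ContinuousLinearMap.one_apply]
    refine Prod.ext rfl ?_
    simp only [inner_sub_right, real_inner_smul_right]
    ring
  have happB : ∀ q : X3, B q = (q.1, (1 + c)⁻¹ * (q.2 + q.1.1 + ⟪nhat, q.1.2⟫)) := by
    rintro ⟨⟨dt, dx⟩, ds⟩
    simp only [hB, ContinuousLinearMap.prod_apply, ContinuousLinearMap.smul_apply,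
      ContinuousLinearMap.add_apply, ContinuousLinearMap.comp_apply,
      ContinuousLinearMap.coe_fst', ContinuousLinearMap.coe_snd', innerSL_apply_apply,
      hfstX, hsndX, hfstP, hsndP, smul_eq_mul]
  have hBA : Function.LeftInverse B A := by
    intro q
    rw [happA, happB]
    refine Prod.ext rfl ?_
    simp only
    field_simp
    ring
  have hAB : Function.RightInverse B A := by
    intro q
    rw [happB, happA]
    refine Prod.ext rfl ?_
    simp only
    field_simp
    ring
  set Aeq : X3 ≃L[ℝ] X3 := ContinuousLinearEquiv.equivOfInverse A B hBA hAB with hAeq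
  have hΦ' : HasStrictFDerivAt Φ (Aeq : X3 →L[ℝ] X3) q₀ := hΦs
  have hΦq₀ : Φ q₀ = ((t₀, x₀), 0) := by
    refine Prod.ext rfl ?_
    have h1 := htp t₀ x₀
    rw [← hs₀] at h1
    simp only [hΦdef, hgdef, hq₀]
    linarith
  -- local inverse and derivative of tplus
  set inv : X3 → X3 := HasStrictFDerivAt.localInverse Φ Aeq q₀ hΦ' with hinvdef
  have hinv : HasStrictFDerivAt inv (Aeq.symm : X3 →L[ℝ] X3) (((t₀ : ℝ), x₀), (0 : ℝ)) := by
    have := hΦ'.to_localInverse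
    rwa [hΦq₀] at this
  have hpair : HasStrictFDerivAt (fun p : P3 => (p, (0 : ℝ)))
      (ContinuousLinearMap.inl ℝ P3 ℝ) (t₀, x₀) :=
    (ContinuousLinearMap.inl ℝ P3 ℝ).hasStrictFDerivAt
  set ψ' : P3 →L[ℝ] ℝ :=
    sndX.comp (((Aeq.symm : X3 →L[ℝ] X3)).comp (ContinuousLinearMap.inl ℝ P3 ℝ)) with hψ'
  have hψ : HasStrictFDerivAt (fun p : P3 => (inv (p, 0)).2) ψ' (t₀, x₀) := by
    have h1 : HasStrictFDerivAt (fun p : P3 => inv (p, 0))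
        ((Aeq.symm : X3 →L[ℝ] X3).comp (ContinuousLinearMap.inl ℝ P3 ℝ)) (t₀, x₀) :=
      hinv.comp (t₀, x₀) hpair
    exact sndX.hasStrictFDerivAt.comp (t₀, x₀) h1
  -- tplus agrees with the local inverse near (t₀, x₀)
  have hright := hΦ'.eventually_right_inverse
  rw [hΦq₀] at hright
  have hk : Filter.Tendsto (fun p : P3 => (p, (0 : ℝ))) (nhds (t₀, x₀))
      (nhds (((t₀ : ℝ), x₀), (0 : ℝ))) :=
    (Continuous.prodMk continuous_id continuous_const).tendsto (t₀, x₀)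
  have hev : (fun p : P3 => tplus p.1 p.2) =ᶠ[nhds ((t₀ : ℝ), x₀)]
      fun p : P3 => (inv (p, 0)).2 := by
    filter_upwards [hk.eventually hright] with p hp
    have h1 : (inv (p, 0)).1 = p := congrArg Prod.fst hp
    have h2 : g (inv (p, 0)) = 0 := congrArg Prod.snd hp
    simp only [hgdef] at h2
    rw [h1] at h2
    have h3 : (inv (p, 0)).2 = p.1 + ‖p.2 - xj ((inv (p, 0)).2)‖ := by linarith
    exact (huniq p.1 p.2 _ h3).symm
  have htps : HasFDerivAt (fun p : P3 => tplus p.1 p.2) ψ' (t₀, x₀) :=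
    hψ.hasFDerivAt.congr_of_eventuallyEq hev
  -- the delay function equals tplus - t
  have hφeq : (fun p : P3 => ‖p.2 - xj (tplus p.1 p.2)‖)
      = fun p : P3 => tplus p.1 p.2 - p.1 := by
    funext p
    have := htp p.1 p.2
    linarith
  have hFφ : HasFDerivAt (fun p : P3 => ‖p.2 - xj (tplus p.1 p.2)‖) (ψ' - fstP) (t₀, x₀) := by
    rw [hφeq]
    exact htps.sub fstP.hasFDerivAt
  -- value of ψ'
  have hψval : ∀ dp : P3, ψ' dp = (1 + c)⁻¹ * (dp.1 + ⟪nhat, dp.2⟫) := by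
    intro dp
    have hsymm : (Aeq.symm : X3 →L[ℝ] X3) = B := by
      rw [hAeq, ContinuousLinearEquiv.symm_equivOfInverse]
      rfl
    simp only [hψ', ContinuousLinearMap.comp_apply, hsymm]
    rw [happB]
    simp only [hsndX, ContinuousLinearMap.coe_snd', ContinuousLinearMap.inl_apply]
    ring_nf
  refine ⟨hFφ.differentiableAt, ?_, ?_, ?_⟩
  · -- gradient statement
    have hinr : HasFDerivAt (fun x : E3 => ((t₀ : ℝ), x))
        (ContinuousLinearMap.prod (0 : E3 →L[ℝ] ℝ) (ContinuousLinearMap.id ℝ E3)) x₀ :=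
      (hasFDerivAt_const t₀ x₀).prodMk (hasFDerivAt_id x₀)
    have hgr : HasFDerivAt (fun x : E3 => ‖x - xj (tplus t₀ x)‖)
        ((ψ' - fstP).comp
          (ContinuousLinearMap.prod (0 : E3 →L[ℝ] ℝ) (ContinuousLinearMap.id ℝ E3))) x₀ := by
      have := hFφ.comp x₀ hinr
      exact this
    rw [hasGradientAt_iff_hasFDerivAt]
    have heq : (ψ' - fstP).comp
        (ContinuousLinearMap.prod (0 : E3 →L[ℝ] ℝ) (ContinuousLinearMap.id ℝ E3))
        = InnerProductSpace.toDual ℝ E3 ((1 + c)⁻¹ • nhat) := by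
      apply ContinuousLinearMap.ext
      intro z
      simp only [ContinuousLinearMap.comp_apply, ContinuousLinearMap.prod_apply,
        ContinuousLinearMap.zero_apply, ContinuousLinearMap.id_apply,
        ContinuousLinearMap.sub_apply, InnerProductSpace.toDual_apply_apply]
      rw [hψval]
      simp only [hfstP, ContinuousLinearMap.coe_fst']
      rw [real_inner_smul_left]
      ring_nf
    rw [← heq]
    exact hgr
  · -- time derivative statement
    have hinl : HasFDerivAt (fun t : ℝ => (t, x₀))
        (ContinuousLinearMap.prod (ContinuousLinearMap.id ℝ ℝ) (0 : ℝ →L[ℝ] E3)) t₀ :=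
      (hasFDerivAt_id t₀).prodMk (hasFDerivAt_const x₀ t₀)
    have hdt : HasFDerivAt (fun t : ℝ => ‖x₀ - xj (tplus t x₀)‖)
        ((ψ' - fstP).comp
          (ContinuousLinearMap.prod (ContinuousLinearMap.id ℝ ℝ) (0 : ℝ →L[ℝ] E3))) t₀ := by
      have := hFφ.comp t₀ hinl
      exact this
    have := hdt.hasDerivAt
    convert this using 1
    simp only [ContinuousLinearMap.comp_apply, ContinuousLinearMap.prod_apply,
      ContinuousLinearMap.zero_apply, ContinuousLinearMap.id_apply,
      ContinuousLinearMap.sub_apply]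
    rw [hψval]
    simp only [hfstP, ContinuousLinearMap.coe_fst', inner_zero_right]
    field_simp
    ring
  · -- algebraic identity
    rw [norm_smul, hnnorm, mul_one, Real.norm_eq_abs, abs_of_pos (inv_pos.mpr h1c)]
    field_simp
    ring
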